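/- Let d ≥ 1, let A be a d×d real matrix with nonnegative entries, and suppose there are constants C, M ≥ 1 and α ∈ (0, 1) with A_{ij} ≤ C α^{j−i} for all 1 ≤ i ≤ j ≤ d and A_{ij} ≤ M for all 1 ≤ i, j ≤ d. Fix δ ∈ (α, 1), β ∈ (α, δ), and set C' = M/(1 − √δ) + C (α/√δ)/(1 − α/√δ). Then for every x ∈ ℝ^d with nonnegative entries, (∑_{i=1}^d β^i (A x)_i)² ≤ (max_{1 ≤ j ≤ d} δ^{j/2} x_j)² · (C')² · (β/(1−β)) · ((β/δ)/(1 − β/δ)). -/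

import Mathlib

open Matrix Finset

private lemma geomAux {r : ℝ} (h0 : 0 ≤ r) (h1 : r < 1) (n : ℕ) :
    ∑ k ∈ Finset.range n, r ^ k ≤ 1 / (1 - r) := by
  have h : (0:ℝ) < 1 - r := by linarith
  rw [geom_sum_eq (by linarith : r ≠ 1)]
  rw [show (r ^ n - 1) / (r - 1) = (1 - r ^ n) / (1 - r) by
    rw [← neg_div_neg_eq]; ring_nf]
  gcongr
  nlinarith [pow_nonneg h0 n]

private lemma geomAux2 {r : ℝ} (h0 : 0 ≤ r) (h1 : r < 1) (n : ℕ) :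
    ∑ k ∈ Finset.range n, r ^ (k + 1) ≤ r / (1 - r) := by
  have h : ∑ k ∈ Finset.range n, r ^ (k + 1) = r * ∑ k ∈ Finset.range n, r ^ k := by
    rw [Finset.mul_sum]; exact Finset.sum_congr rfl fun k _ => by ring
  rw [h]
  calc r * ∑ k ∈ Finset.range n, r ^ k ≤ r * (1 / (1 - r)) :=
        mul_le_mul_of_nonneg_left (geomAux h0 h1 n) h0
    _ = r / (1 - r) := by ring

/-- Under the geometric off-diagonal bound and uniform bound on the nonnegative matrix `A`,
the square of the weighted `ℓ¹` functional `∑ βⁱ (Ax)_i` is controlled by the square of the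
weighted sup-norm `max_j δ^{j/2} x_j = max_j (√δ)ʲ x_j`. Indices of `Fin d` are 0-based, so
the paper's 1-based index `i` corresponds to `(i : ℕ) + 1`. -/
theorem stmt13 (d : ℕ) (hd : 1 ≤ d) (A : Matrix (Fin d) (Fin d) ℝ)
    (C M α δ β : ℝ) (hC : 1 ≤ C) (hM : 1 ≤ M)
    (hα0 : 0 < α) (hαδ : α < δ) (hδ1 : δ < 1) (hαβ : α < β) (hβδ : β < δ)
    (hnn : ∀ i j, 0 ≤ A i j)
    (hgeo : ∀ i j : Fin d, (i : ℕ) ≤ (j : ℕ) → A i j ≤ C * α ^ ((j : ℕ) - (i : ℕ)))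
    (hbdd : ∀ i j, A i j ≤ M)
    (C' : ℝ)
    (hC' : C' = M / (1 - Real.sqrt δ) + C * (α / Real.sqrt δ) / (1 - α / Real.sqrt δ))
    (x : Fin d → ℝ) (hx : ∀ i, 0 ≤ x i) :
    (∑ i : Fin d, β ^ ((i : ℕ) + 1) * (A *ᵥ x) i) ^ 2 ≤
      (univ.sup' ⟨⟨0, hd⟩, mem_univ _⟩
          (fun j : Fin d => Real.sqrt δ ^ ((j : ℕ) + 1) * x j)) ^ 2 *
        C' ^ 2 * (β / (1 - β)) * ((β / δ) / (1 - β / δ)) := by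
  have hδ0 : 0 < δ := lt_trans hα0 hαδ
  set γ := Real.sqrt δ with hγdef
  have hγ0 : 0 < γ := Real.sqrt_pos.mpr hδ0
  have hγδ : γ ^ 2 = δ := Real.sq_sqrt hδ0.le
  have hγ1 : γ < 1 := by nlinarith
  have hβ0 : 0 < β := lt_trans hα0 hαβ
  have hβ1 : β < 1 := lt_trans hβδ hδ1
  have hα1 : α < 1 := lt_trans hαδ hδ1
  have hβγ : β < γ := by nlinarith
  have hαγ : α < γ := lt_trans hαβ hβγ
  have hs1 : β / γ < 1 := (div_lt_one hγ0).mpr hβγ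
  have hs0 : 0 < β / γ := div_pos hβ0 hγ0
  have hr1 : α / γ < 1 := (div_lt_one hγ0).mpr hαγ
  have hr0 : 0 < α / γ := div_pos hα0 hγ0
  have hC'0 : 0 ≤ C' := by
    rw [hC']
    have h1 : (0:ℝ) < 1 - γ := by linarith
    have h2 : (0:ℝ) < 1 - α / γ := by linarith
    positivity
  set N := univ.sup' ⟨⟨0, hd⟩, mem_univ _⟩
      (fun j : Fin d => γ ^ ((j : ℕ) + 1) * x j) with hNdef
  have hN : ∀ j : Fin d, γ ^ ((j : ℕ) + 1) * x j ≤ N :=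
    fun j => Finset.le_sup' (fun j : Fin d => γ ^ ((j : ℕ) + 1) * x j) (mem_univ j)
  have hN0 : 0 ≤ N :=
    le_trans (mul_nonneg (pow_nonneg hγ0.le _) (hx _)) (hN ⟨0, hd⟩)
  -- row bound
  have hrow : ∀ i : Fin d, γ ^ ((i : ℕ) + 1) * (A *ᵥ x) i ≤ C' * N := by
    intro i
    have hm : (A *ᵥ x) i = ∑ j, A i j * x j := by
      simp [Matrix.mulVec, dotProduct]
    have expand : γ ^ ((i : ℕ) + 1) * (A *ᵥ x) i
        = ∑ j : Fin d, A i j * (γ ^ ((i : ℕ) + 1) * x j) := by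
      rw [hm, Finset.mul_sum]; exact Finset.sum_congr rfl fun j _ => by ring
    rw [expand]
    set g : ℕ → ℝ := fun j =>
      if j ≤ (i : ℕ) then M * γ ^ ((i : ℕ) - j) else C * (α / γ) ^ (j - (i : ℕ)) with hgdef
    have term : ∀ j : Fin d, A i j * (γ ^ ((i : ℕ) + 1) * x j) ≤ g (j : ℕ) * N := by
      intro j
      have hxj : 0 ≤ γ ^ ((i : ℕ) + 1) * x j :=
        mul_nonneg (pow_nonneg hγ0.le _) (hx j)
      by_cases h : (j : ℕ) ≤ (i : ℕ)
      · have hp : γ ^ ((i : ℕ) + 1)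
            = γ ^ ((i : ℕ) - (j : ℕ)) * γ ^ ((j : ℕ) + 1) := by
          rw [← pow_add]; congr 1; omega
        calc A i j * (γ ^ ((i : ℕ) + 1) * x j)
            ≤ M * (γ ^ ((i : ℕ) + 1) * x j) :=
              mul_le_mul_of_nonneg_right (hbdd i j) hxj
          _ = M * (γ ^ ((i : ℕ) - (j : ℕ)) * (γ ^ ((j : ℕ) + 1) * x j)) := by
              rw [hp]; ring
          _ ≤ M * (γ ^ ((i : ℕ) - (j : ℕ)) * N) := by
              apply mul_le_mul_of_nonneg_left _ (by linarith : (0:ℝ) ≤ M)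
              exact mul_le_mul_of_nonneg_left (hN j) (pow_nonneg hγ0.le _)
          _ = g (j : ℕ) * N := by simp only [hgdef, if_pos h]; ring
      · have hij : (i : ℕ) < (j : ℕ) := by omega
        have hpow : C * α ^ ((j : ℕ) - (i : ℕ)) * γ ^ ((i : ℕ) + 1)
            = C * (α / γ) ^ ((j : ℕ) - (i : ℕ)) * γ ^ ((j : ℕ) + 1) := by
          rw [div_pow, show (j : ℕ) + 1 = ((j : ℕ) - (i : ℕ)) + ((i : ℕ) + 1) from by omega,
            pow_add]
          have : γ ^ ((j : ℕ) - (i : ℕ)) ≠ 0 := pow_ne_zero _ (ne_of_gt hγ0)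
          field_simp
          rw [pow_add, pow_succ]
          ring
        calc A i j * (γ ^ ((i : ℕ) + 1) * x j)
            ≤ C * α ^ ((j : ℕ) - (i : ℕ)) * (γ ^ ((i : ℕ) + 1) * x j) :=
              mul_le_mul_of_nonneg_right (hgeo i j hij.le) hxj
          _ = C * (α / γ) ^ ((j : ℕ) - (i : ℕ)) * (γ ^ ((j : ℕ) + 1) * x j) := by
              rw [← mul_assoc, hpow]; ring
          _ ≤ C * (α / γ) ^ ((j : ℕ) - (i : ℕ)) * N := by
              apply mul_le_mul_of_nonneg_left (hN j)
              positivity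
          _ = g (j : ℕ) * N := by simp only [hgdef, if_neg h]
    have gsum : ∑ k ∈ Finset.range d, g k ≤ C' := by
      rw [hC']
      have hid : (i : ℕ) + 1 ≤ d := i.isLt
      have hsplit : ∑ k ∈ Finset.range d, g k
          = ∑ k ∈ Finset.range ((i : ℕ) + 1), g k
            + ∑ k ∈ Finset.Ico ((i : ℕ) + 1) d, g k := by
        rw [Finset.range_eq_Ico, Finset.range_eq_Ico]
        exact (Finset.sum_Ico_consecutive g (Nat.zero_le _) hid).symm
      rw [hsplit]
      have part1 : ∑ k ∈ Finset.range ((i : ℕ) + 1), g k ≤ M / (1 - γ) := by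
        have e1 : ∑ k ∈ Finset.range ((i : ℕ) + 1), g k
            = M * ∑ k ∈ Finset.range ((i : ℕ) + 1), γ ^ ((i : ℕ) - k) := by
          rw [Finset.mul_sum]
          apply Finset.sum_congr rfl
          intro k hk
          have : k ≤ (i : ℕ) := by
            have := Finset.mem_range.mp hk; omega
          simp only [hgdef, if_pos this]
        have e2 : ∑ k ∈ Finset.range ((i : ℕ) + 1), γ ^ ((i : ℕ) - k)
            = ∑ k ∈ Finset.range ((i : ℕ) + 1), γ ^ k := by
          have := Finset.sum_range_reflect (fun k => γ ^ k) ((i : ℕ) + 1)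
          simpa using this
        rw [e1, e2]
        calc M * ∑ k ∈ Finset.range ((i : ℕ) + 1), γ ^ k
            ≤ M * (1 / (1 - γ)) :=
              mul_le_mul_of_nonneg_left (geomAux hγ0.le hγ1 _) (by linarith)
          _ = M / (1 - γ) := by ring
      have part2 : ∑ k ∈ Finset.Ico ((i : ℕ) + 1) d, g k
          ≤ C * (α / γ) / (1 - α / γ) := by
        rw [Finset.sum_Ico_eq_sum_range]
        have e1 : ∀ k, g ((i : ℕ) + 1 + k) = C * (α / γ) ^ (k + 1) := by
          intro k
          have h1 : ¬ ((i : ℕ) + 1 + k ≤ (i : ℕ)) := by omega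
          have h2 : (i : ℕ) + 1 + k - (i : ℕ) = k + 1 := by omega
          simp only [hgdef, if_neg h1, h2]
        calc ∑ k ∈ Finset.range (d - ((i : ℕ) + 1)), g ((i : ℕ) + 1 + k)
            = C * ∑ k ∈ Finset.range (d - ((i : ℕ) + 1)), (α / γ) ^ (k + 1) := by
              rw [Finset.mul_sum]; exact Finset.sum_congr rfl fun k _ => e1 k
          _ ≤ C * ((α / γ) / (1 - α / γ)) :=
              mul_le_mul_of_nonneg_left (geomAux2 hr0.le hr1 _) (by linarith)
          _ = C * (α / γ) / (1 - α / γ) := by ring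
      linarith
    calc ∑ j : Fin d, A i j * (γ ^ ((i : ℕ) + 1) * x j)
        ≤ ∑ j : Fin d, g (j : ℕ) * N := Finset.sum_le_sum fun j _ => term j
      _ = ∑ k ∈ Finset.range d, g k * N :=
          Fin.sum_univ_eq_sum_range (fun k => g k * N) d
      _ = (∑ k ∈ Finset.range d, g k) * N := (Finset.sum_mul _ _ _).symm
      _ ≤ C' * N := mul_le_mul_of_nonneg_right gsum hN0
  -- sum bound
  have hAx0 : ∀ i : Fin d, 0 ≤ (A *ᵥ x) i := by
    intro i
    have hm : (A *ᵥ x) i = ∑ j, A i j * x j := by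
      simp [Matrix.mulVec, dotProduct]
    rw [hm]
    exact Finset.sum_nonneg fun j _ => mul_nonneg (hnn i j) (hx j)
  have hS0 : 0 ≤ ∑ i : Fin d, β ^ ((i : ℕ) + 1) * (A *ᵥ x) i :=
    Finset.sum_nonneg fun i _ => mul_nonneg (pow_nonneg hβ0.le _) (hAx0 i)
  have hS : ∑ i : Fin d, β ^ ((i : ℕ) + 1) * (A *ᵥ x) i
      ≤ (C' * N) * ((β / γ) / (1 - β / γ)) := by
    have hterm : ∀ i : Fin d, β ^ ((i : ℕ) + 1) * (A *ᵥ x) i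
        ≤ (β / γ) ^ ((i : ℕ) + 1) * (C' * N) := by
      intro i
      have hβe : β ^ ((i : ℕ) + 1) = (β / γ) ^ ((i : ℕ) + 1) * γ ^ ((i : ℕ) + 1) := by
        rw [← mul_pow, div_mul_cancel₀ _ (ne_of_gt hγ0)]
      rw [hβe, mul_assoc]
      exact mul_le_mul_of_nonneg_left (hrow i) (by positivity)
    calc ∑ i : Fin d, β ^ ((i : ℕ) + 1) * (A *ᵥ x) i
        ≤ ∑ i : Fin d, (β / γ) ^ ((i : ℕ) + 1) * (C' * N) :=
          Finset.sum_le_sum fun i _ => hterm i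
      _ = ∑ k ∈ Finset.range d, (β / γ) ^ (k + 1) * (C' * N) :=
          Fin.sum_univ_eq_sum_range (fun k => (β / γ) ^ (k + 1) * (C' * N)) d
      _ = (∑ k ∈ Finset.range d, (β / γ) ^ (k + 1)) * (C' * N) :=
          (Finset.sum_mul _ _ _).symm
      _ ≤ ((β / γ) / (1 - β / γ)) * (C' * N) :=
          mul_le_mul_of_nonneg_right (geomAux2 hs0.le hs1 _) (mul_nonneg hC'0 hN0)
      _ = (C' * N) * ((β / γ) / (1 - β / γ)) := by ring
  -- key scalar inequality
  have hβδ1 : β / δ < 1 := (div_lt_one hδ0).mpr hβδ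
  have hβδ0 : 0 < β / δ := div_pos hβ0 hδ0
  have hkey : ((β / γ) / (1 - β / γ)) ^ 2 ≤ (β / (1 - β)) * ((β / δ) / (1 - β / δ)) := by
    have h1s : (0:ℝ) < 1 - β / γ := by linarith
    have hnum : (β / γ) ^ 2 = β * (β / δ) := by
      rw [div_pow, hγδ]; ring
    have hden : (1 - β) * (1 - β / δ) ≤ (1 - β / γ) ^ 2 := by
      have e : (1 - β / γ) ^ 2 - (1 - β) * (1 - β / δ) = (β / δ) * (1 - γ) ^ 2 := by
        rw [show δ = γ ^ 2 from hγδ.symm]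
        field_simp
        ring
      nlinarith [sq_nonneg (1 - γ), mul_nonneg hβδ0.le (sq_nonneg (1 - γ))]
    have hdpos : (0:ℝ) < (1 - β) * (1 - β / δ) :=
      mul_pos (by linarith) (by linarith)
    rw [div_pow, hnum, show (β / (1 - β)) * ((β / δ) / (1 - β / δ))
        = (β * (β / δ)) / ((1 - β) * (1 - β / δ)) from by rw [div_mul_div_comm]]
    exact div_le_div_of_nonneg_left (by positivity) hdpos hden |>.trans_eq rfl
  -- conclude
  have hR0 : 0 ≤ (C' * N) * ((β / γ) / (1 - β / γ)) := by
    have h1s : (0:ℝ) < 1 - β / γ := by linarith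
    positivity
  calc (∑ i : Fin d, β ^ ((i : ℕ) + 1) * (A *ᵥ x) i) ^ 2
      ≤ ((C' * N) * ((β / γ) / (1 - β / γ))) ^ 2 := by
        exact pow_le_pow_left₀ hS0 hS 2
    _ = (N ^ 2 * C' ^ 2) * ((β / γ) / (1 - β / γ)) ^ 2 := by ring
    _ ≤ (N ^ 2 * C' ^ 2) * ((β / (1 - β)) * ((β / δ) / (1 - β / δ))) :=
        mul_le_mul_of_nonneg_left hkey (by positivity)
    _ = N ^ 2 * C' ^ 2 * (β / (1 - β)) * ((β / δ) / (1 - β / δ)) := by ring
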